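/- Let s > 2 be an integer and let S = { x : x = ∑_{n=1}^∞ α_n / s^{α_1+...+α_n}, α_n ∈ {1,...,s-1} }. Then S is a perfect set: S is closed and has no isolated points. -/

import Mathlib

open Finset

/-- The set `S` of sums `∑ αₙ / s^(α₁+⋯+αₙ)` over digit sequences with values in `{1,…,s-1}`. -/
def Sset (s : ℕ) : Set ℝ :=
  {x : ℝ | ∃ α : ℕ → ℕ, (∀ n, 1 ≤ α n ∧ α n ≤ s - 1) ∧
    x = ∑' n : ℕ, (α n : ℝ) / (s : ℝ) ^ (∑ k ∈ Finset.range (n + 1), α k)}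

namespace Stmt4Aux

variable (s : ℕ)

/-- The `n`-th term. -/
noncomputable def term (α : ℕ → ℕ) (n : ℕ) : ℝ :=
  (α n : ℝ) / (s : ℝ) ^ (∑ k ∈ Finset.range (n + 1), α k)

noncomputable def fval (α : ℕ → ℕ) : ℝ := ∑' n, term s α n

def Valid (α : ℕ → ℕ) : Prop := ∀ n, 1 ≤ α n ∧ α n ≤ s - 1

variable {s}

lemma hs1 (hs : 2 < s) : (1:ℝ) < (s:ℝ) := by exact_mod_cast Nat.lt_of_lt_of_le (by norm_num) hs.le
lemma hs0 (hs : 2 < s) : (0:ℝ) < (s:ℝ) := lt_trans one_pos (hs1 hs)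
lemma hs3 (hs : 2 < s) : (3:ℝ) ≤ (s:ℝ) := by exact_mod_cast hs

lemma exp_ge (hv : Valid s α) (n : ℕ) : n + 1 ≤ ∑ k ∈ Finset.range (n + 1), α k := by
  calc n + 1 = ∑ _k ∈ Finset.range (n+1), 1 := by simp
    _ ≤ ∑ k ∈ Finset.range (n + 1), α k := Finset.sum_le_sum (fun i _ => (hv i).1)

lemma term_nonneg (hs : 2 < s) (α : ℕ → ℕ) (n : ℕ) : 0 ≤ term s α n := by
  apply div_nonneg (by positivity)
  positivity

lemma term_pos (hs : 2 < s) {α : ℕ → ℕ} (hv : Valid s α) (n : ℕ) : 0 < term s α n := by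
  apply div_pos
  · exact_mod_cast Nat.lt_of_lt_of_le Nat.zero_lt_one (hv n).1
  · exact pow_pos (hs0 hs) _

lemma term_le (hs : 2 < s) {α : ℕ → ℕ} (hv : Valid s α) (n : ℕ) :
    term s α n ≤ ((s:ℝ) - 1) * ((1:ℝ)/(s:ℝ)) ^ (n + 1) := by
  have h1 : (α n : ℝ) ≤ (s:ℝ) - 1 := by
    have := (hv n).2
    have hcast : (α n : ℝ) ≤ ((s - 1 : ℕ) : ℝ) := by exact_mod_cast this
    rwa [Nat.cast_sub (by omega), Nat.cast_one] at hcast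
  have h2 : ((s:ℝ)) ^ (n+1) ≤ ((s:ℝ)) ^ (∑ k ∈ Finset.range (n + 1), α k) :=
    pow_le_pow_right₀ (hs1 hs).le (exp_ge hv n)
  have : term s α n ≤ ((s:ℝ) - 1) / (s:ℝ) ^ (n+1) :=
    div_le_div₀ (by linarith [hs3 hs]) h1 (pow_pos (hs0 hs) _) h2
  calc term s α n ≤ ((s:ℝ) - 1) / (s:ℝ) ^ (n+1) := this
    _ = ((s:ℝ) - 1) * ((1:ℝ)/(s:ℝ)) ^ (n + 1) := by
        rw [div_pow, one_pow, div_eq_mul_inv, div_eq_mul_inv, one_mul]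

lemma summable_bound (hs : 2 < s) :
    Summable (fun n : ℕ => ((s:ℝ) - 1) * ((1:ℝ)/(s:ℝ)) ^ (n + 1)) := by
  apply Summable.mul_left
  exact ((summable_geometric_of_lt_one (by positivity)
    ((div_lt_one (hs0 hs)).2 (hs1 hs))).mul_left _).congr (fun n => by rw [pow_succ, mul_comm])

lemma summable_term (hs : 2 < s) {α : ℕ → ℕ} (hv : Valid s α) : Summable (term s α) :=
  Summable.of_nonneg_of_le (term_nonneg hs α) (term_le hs hv) (summable_bound hs)

lemma tsum_bound_eq (hs : 2 < s) :
    (∑' n : ℕ, ((s:ℝ) - 1) * ((1:ℝ)/(s:ℝ)) ^ (n + 1)) = 1 := by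
  have hr0 : (0:ℝ) ≤ 1/(s:ℝ) := by positivity
  have hr1 : (1:ℝ)/(s:ℝ) < 1 := (div_lt_one (hs0 hs)).2 (hs1 hs)
  have : (∑' n : ℕ, ((s:ℝ) - 1) * ((1:ℝ)/(s:ℝ)) ^ (n + 1))
      = ((s:ℝ) - 1) * ((1/(s:ℝ)) * (1 - 1/(s:ℝ))⁻¹) := by
    rw [← tsum_geometric_of_lt_one hr0 hr1, ← tsum_mul_left, ← tsum_mul_left]
    congr 1; funext n; ring
  rw [this]
  have hs0' := hs0 hs
  have h2 : (s:ℝ) - 1 ≠ 0 := by linarith [hs3 hs]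
  have h3 : (s:ℝ) ≠ 0 := ne_of_gt hs0'
  field_simp

lemma fval_nonneg (hs : 2 < s) (α : ℕ → ℕ) : 0 ≤ fval s α :=
  tsum_nonneg (term_nonneg hs α)

lemma fval_le_one (hs : 2 < s) {α : ℕ → ℕ} (hv : Valid s α) : fval s α ≤ 1 := by
  have := Summable.tsum_le_tsum (term_le hs hv) (summable_term hs hv) (summable_bound hs)
  rwa [tsum_bound_eq hs] at this

lemma three_pow (d : ℕ) : 2*d+1 ≤ 3^d := by
  induction d with
  | zero => simp
  | succ d ih =>
      have h3 : 3*(2*d+1) ≤ 3*3^d := Nat.mul_le_mul_left 3 ih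
      rw [pow_succ]
      omega

lemma nat_strict {a s : ℕ} (ha : 1 ≤ a) (hs : 3 ≤ s) : a * s < (s-1) * s^a := by
  have h1 : a ≤ s ^ (a-1) := by
    have : a-1 < s^(a-1) := Nat.lt_pow_self (show 1 < s by omega)
    omega
  have h2 : s ^ a = s * s ^ (a-1) := by
    conv_lhs => rw [show a = (a-1)+1 by omega]
    rw [pow_succ]; ring
  rw [h2]
  have hsa : 1 ≤ s * a := Nat.one_le_iff_ne_zero.2 (by positivity)
  calc a * s < 2 * (s * a) := by nlinarith
    _ ≤ (s-1) * (s * s^(a-1)) := by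
        calc 2 * (s*a) ≤ (s-1)*(s*a) := Nat.mul_le_mul_right _ (by omega)
          _ ≤ (s-1)*(s*s^(a-1)) := Nat.mul_le_mul_left _ (Nat.mul_le_mul_left _ h1)

lemma nat_gap {a b s : ℕ} (ha : 1 ≤ a) (hab : a < b) (hs : 3 ≤ s) :
    (b+1) * s^a ≤ a * s^b := by
  set d := b - a with hd
  have hd1 : 1 ≤ d := by omega
  have h1 : b + 1 ≤ a * (2*d+1) := by
    have h0 : 1*(2*d) ≤ a*(2*d) := Nat.mul_le_mul_right _ ha
    have : a * (2*d+1) = a + a*(2*d) := by ring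
    omega
  have h2 : a * (2*d+1) ≤ a * s^d :=
    Nat.mul_le_mul_left _ ((three_pow d).trans (Nat.pow_le_pow_left hs d))
  calc (b+1) * s^a ≤ (a * s^d) * s^a := Nat.mul_le_mul_right _ (h1.trans h2)
    _ = a * s^b := by rw [mul_assoc, ← pow_add]; congr 2; omega

lemma sum_range_one_term (α : ℕ → ℕ) :
    ∑ i ∈ Finset.range 1, term s α i = (α 0 : ℝ) / (s:ℝ) ^ (α 0) := by
  simp [term]

lemma fval_lower (hs : 2 < s) {α : ℕ → ℕ} (hv : Valid s α) :
    (α 0 : ℝ) / (s:ℝ) ^ (α 0) < fval s α := by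
  have hsum := summable_term hs hv
  have hdec := Summable.sum_add_tsum_nat_add (f := term s α) 1 hsum
  have hsh : Summable (fun i => term s α (i + 1)) := (summable_nat_add_iff 1).2 hsum
  have htail : 0 < ∑' i, term s α (i + 1) := by
    have h1 : term s α (0 + 1) ≤ ∑' i, term s α (i + 1) :=
      Summable.le_tsum hsh 0 (fun j _ => term_nonneg hs α _)
    have := term_pos hs hv 1
    simpa using lt_of_lt_of_le this h1
  rw [fval, ← hdec, sum_range_one_term]
  linarith

lemma cast_sub_one (hs : 2 < s) : ((s - 1 : ℕ) : ℝ) = (s:ℝ) - 1 := by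
  rw [Nat.cast_sub (by omega), Nat.cast_one]

lemma term_tail_le (hs : 2 < s) {α : ℕ → ℕ} (hv : Valid s α) (m : ℕ) :
    term s α (m+1) ≤ ((s:ℝ) - 1) * ((1:ℝ)/(s:ℝ)) ^ (α 0 + 1 + m) := by
  set a := α (m+1) with ha
  have ha1 : 1 ≤ a := (hv (m+1)).1
  have hA : α 0 + m + a ≤ ∑ k ∈ Finset.range (m + 2), α k := by
    rw [show m + 2 = (m+1)+1 by rfl, Finset.sum_range_succ]
    have hmid : α 0 + m ≤ ∑ k ∈ Finset.range (m+1), α k := by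
      rw [Finset.sum_range_succ']
      have hle : m ≤ ∑ k ∈ Finset.range m, α (k+1) := by
        calc m = ∑ _k ∈ Finset.range m, 1 := by simp
          _ ≤ ∑ k ∈ Finset.range m, α (k+1) := Finset.sum_le_sum (fun i _ => (hv (i+1)).1)
      omega
    omega
  have hnat : a * s ^ (α 0 + m + 1) ≤ (s - 1) * s ^ (α 0 + m + a) := by
    have h := (nat_strict ha1 (by omega : 3 ≤ s)).le
    calc a * s ^ (α 0 + m + 1) = (a * s) * s ^ (α 0 + m) := by rw [pow_succ]; ring
      _ ≤ ((s-1) * s^a) * s ^ (α 0 + m) := Nat.mul_le_mul_right _ h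
      _ = (s - 1) * s ^ (α 0 + m + a) := by rw [pow_add]; ring
  have hcast : (a:ℝ) * (s:ℝ) ^ (α 0 + m + 1) ≤ ((s:ℝ) - 1) * (s:ℝ) ^ (α 0 + m + a) := by
    rw [← cast_sub_one hs]; exact_mod_cast hnat
  have hstep1 : term s α (m+1) ≤ (a:ℝ) / (s:ℝ) ^ (α 0 + m + a) := by
    unfold term
    apply div_le_div_of_nonneg_left (by positivity) (pow_pos (hs0 hs) _)
    exact pow_le_pow_right₀ (hs1 hs).le hA
  have hstep2 : (a:ℝ) / (s:ℝ) ^ (α 0 + m + a) ≤ ((s:ℝ)-1) / (s:ℝ) ^ (α 0 + m + 1) := by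
    rw [div_le_div_iff₀ (by positivity) (by positivity)]
    exact hcast
  have hfin : ((s:ℝ)-1) / (s:ℝ) ^ (α 0 + m + 1)
      = ((s:ℝ) - 1) * ((1:ℝ)/(s:ℝ)) ^ (α 0 + 1 + m) := by
    rw [show α 0 + 1 + m = α 0 + m + 1 from by omega, one_div, inv_pow, div_eq_mul_inv]
  linarith [hstep1, hstep2, hfin.ge]

lemma term_tail_lt0 (hs : 2 < s) {α : ℕ → ℕ} (hv : Valid s α) :
    term s α 1 < ((s:ℝ) - 1) * ((1:ℝ)/(s:ℝ)) ^ (α 0 + 1 + 0) := by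
  set a := α 1 with ha
  have ha1 : 1 ≤ a := (hv 1).1
  have hA : ∑ k ∈ Finset.range 2, α k = α 0 + a := by
    rw [Finset.sum_range_succ, Finset.sum_range_one]
  have hnat : a * s ^ (α 0 + 1) < (s - 1) * s ^ (α 0 + a) := by
    have h := nat_strict ha1 (by omega : 3 ≤ s)
    calc a * s ^ (α 0 + 1) = (a * s) * s ^ (α 0) := by rw [pow_succ]; ring
      _ < ((s-1) * s^a) * s ^ (α 0) := by
          apply Nat.mul_lt_mul_of_lt_of_le h (le_refl _)
          positivity
      _ = (s - 1) * s ^ (α 0 + a) := by rw [pow_add]; ring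
  have hcast : (a:ℝ) * (s:ℝ) ^ (α 0 + 1) < ((s:ℝ) - 1) * (s:ℝ) ^ (α 0 + a) := by
    rw [← cast_sub_one hs]; exact_mod_cast hnat
  have h1 : term s α 1 = (a:ℝ) / (s:ℝ) ^ (α 0 + a) := by
    unfold term; rw [show (1:ℕ)+1 = 2 from rfl, hA]
  rw [h1]
  have h2 : (a:ℝ) / (s:ℝ) ^ (α 0 + a) < ((s:ℝ)-1) / (s:ℝ) ^ (α 0 + 1) := by
    rw [div_lt_div_iff₀ (by positivity) (by positivity)]
    exact hcast
  have hfin : ((s:ℝ)-1) / (s:ℝ) ^ (α 0 + 1)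
      = ((s:ℝ) - 1) * ((1:ℝ)/(s:ℝ)) ^ (α 0 + 1 + 0) := by
    rw [Nat.add_zero, one_div, inv_pow, div_eq_mul_inv]
  linarith [hfin.ge]

lemma tsum_geom_aux (hs : 2 < s) (j : ℕ) :
    (∑' m : ℕ, ((s:ℝ) - 1) * ((1:ℝ)/(s:ℝ)) ^ (j + 1 + m)) = ((1:ℝ)/(s:ℝ)) ^ j := by
  have hr0 : (0:ℝ) ≤ 1/(s:ℝ) := by positivity
  have hr1 : (1:ℝ)/(s:ℝ) < 1 := (div_lt_one (hs0 hs)).2 (hs1 hs)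
  have hkey : (∑' m : ℕ, ((s:ℝ) - 1) * ((1:ℝ)/(s:ℝ)) ^ (j + 1 + m))
      = (((s:ℝ) - 1) * ((1:ℝ)/(s:ℝ)) ^ (j+1)) * (1 - 1/(s:ℝ))⁻¹ := by
    rw [← tsum_geometric_of_lt_one hr0 hr1, ← tsum_mul_left]
    congr 1; funext m; rw [pow_add]; ring
  rw [hkey]
  have hs0' := hs0 hs
  have h2 : (s:ℝ) - 1 ≠ 0 := by linarith [hs3 hs]
  have h3 : (s:ℝ) ≠ 0 := ne_of_gt hs0'
  rw [pow_succ]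
  field_simp

lemma fval_upper (hs : 2 < s) {α : ℕ → ℕ} (hv : Valid s α) :
    fval s α < ((α 0 : ℝ) + 1) / (s:ℝ) ^ (α 0) := by
  have hsum := summable_term hs hv
  have hdec := Summable.sum_add_tsum_nat_add (f := term s α) 1 hsum
  have hgeo : Summable (fun n : ℕ => ((1:ℝ)/(s:ℝ)) ^ n) :=
    summable_geometric_of_lt_one (by positivity) ((div_lt_one (hs0 hs)).2 (hs1 hs))
  have hgs : Summable (fun m : ℕ => ((s:ℝ) - 1) * ((1:ℝ)/(s:ℝ)) ^ (α 0 + 1 + m)) :=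
    ((hgeo.mul_left (((1:ℝ)/(s:ℝ)) ^ (α 0 + 1))).mul_left ((s:ℝ)-1)).congr
      (fun n => by rw [← pow_add])
  have htail : (∑' m, term s α (m+1))
      < ∑' m : ℕ, ((s:ℝ) - 1) * ((1:ℝ)/(s:ℝ)) ^ (α 0 + 1 + m) := by
    apply Summable.tsum_lt_tsum_of_nonneg (i := 0) (fun m => term_nonneg hs α _)
      (fun m => term_tail_le hs hv m) (term_tail_lt0 hs hv) hgs
  rw [tsum_geom_aux hs (α 0)] at htail
  have h0 : ∑ i ∈ Finset.range 1, term s α i = (α 0 : ℝ) / (s:ℝ) ^ (α 0) :=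
    sum_range_one_term α
  have hpow : ((1:ℝ)/(s:ℝ)) ^ (α 0) = 1 / (s:ℝ) ^ (α 0) := by
    rw [div_pow, one_pow]
  rw [fval, ← hdec, h0]
  rw [hpow] at htail
  have : ((α 0 : ℝ) + 1) / (s:ℝ) ^ (α 0)
      = (α 0 : ℝ) / (s:ℝ) ^ (α 0) + 1 / (s:ℝ) ^ (α 0) := by ring
  linarith [this.ge]


lemma fval_lt_of_digit_lt (hs : 2 < s) {α β : ℕ → ℕ} (hvα : Valid s α) (hvβ : Valid s β)
    (h : α 0 < β 0) : fval s β < fval s α := by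
  have h1 := fval_upper hs hvβ
  have h2 := fval_lower hs hvα
  have key : ((β 0 : ℝ) + 1) / (s:ℝ) ^ (β 0) ≤ (α 0 : ℝ) / (s:ℝ) ^ (α 0) := by
    rw [div_le_div_iff₀ (by positivity) (by positivity)]
    have hn := nat_gap (hvα 0).1 h (by omega : 3 ≤ s)
    exact_mod_cast hn
  linarith

lemma fval_ne (hs : 2 < s) {α β : ℕ → ℕ} (hvα : Valid s α) (hvβ : Valid s β)
    (h : α 0 ≠ β 0) : fval s α ≠ fval s β := by
  rcases h.lt_or_gt with hlt | hlt
  · exact (fval_lt_of_digit_lt hs hvα hvβ hlt).ne'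
  · exact (fval_lt_of_digit_lt hs hvβ hvα hlt).ne

lemma fval_decomp (hs : 2 < s) {α : ℕ → ℕ} (hv : Valid s α) (N : ℕ) :
    fval s α = (∑ n ∈ Finset.range N, term s α n)
      + (1/(s:ℝ) ^ (∑ k ∈ Finset.range N, α k)) * fval s (fun m => α (m + N)) := by
  have hterm : ∀ m, term s α (m + N)
      = (1/(s:ℝ) ^ (∑ k ∈ Finset.range N, α k)) * term s (fun j => α (j + N)) m := by
    intro m
    have he : ∑ k ∈ Finset.range (m + N + 1), α k
        = (∑ k ∈ Finset.range N, α k) + ∑ k ∈ Finset.range (m+1), α (k + N) := by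
      rw [show m + N + 1 = N + (m+1) from by omega, Finset.sum_range_add]
      congr 1
      exact Finset.sum_congr rfl (fun i _ => by rw [add_comm])
    show (α (m+N) : ℝ) / (s:ℝ) ^ (∑ k ∈ Finset.range (m + N + 1), α k) = _
    rw [he, pow_add]
    unfold term
    ring
  calc fval s α
      = (∑ n ∈ Finset.range N, term s α n) + ∑' m, term s α (m + N) :=
        (Summable.sum_add_tsum_nat_add N (summable_term hs hv)).symm
    _ = (∑ n ∈ Finset.range N, term s α n)
        + (1/(s:ℝ) ^ (∑ k ∈ Finset.range N, α k)) * fval s (fun m => α (m + N)) := by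
        rw [tsum_congr hterm, tsum_mul_left]; rfl


section Closed

variable (s : ℕ)

noncomputable def gmap (a : ℕ → (Set.Icc 1 (s-1) : Set ℕ)) : ℝ :=
  fval s (fun n => (a n : ℕ))

variable {s}

lemma valid_of_digits (a : ℕ → (Set.Icc 1 (s-1) : Set ℕ)) : Valid s (fun n => (a n : ℕ)) :=
  fun n => Set.mem_Icc.1 (a n).2

lemma range_gmap (hs : 2 < s) : Sset s = Set.range (gmap s) := by
  ext x
  constructor
  · rintro ⟨α, hval, rfl⟩
    refine ⟨fun n => ⟨α n, Set.mem_Icc.2 (hval n)⟩, ?_⟩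
    exact tsum_congr (fun n => rfl)
  · rintro ⟨a, rfl⟩
    exact ⟨fun n => (a n : ℕ), valid_of_digits a, (tsum_congr (fun n => rfl)).symm⟩

lemma continuous_gmap (hs : 2 < s) : Continuous (gmap s) := by
  haveI : Finite (Set.Icc 1 (s-1) : Set ℕ) := (Set.finite_Icc _ _).to_subtype
  have : (gmap s) = fun a => ∑' n, term s (fun k => (a k : ℕ)) n := by
    funext a; rfl
  rw [this]
  apply continuous_tsum (u := fun n : ℕ => ((s:ℝ) - 1) * ((1:ℝ)/(s:ℝ)) ^ (n + 1))
  · intro n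
    -- factor through finitely many coordinates
    have hfac : (fun a : ℕ → (Set.Icc 1 (s-1) : Set ℕ) => term s (fun k => (a k : ℕ)) n)
        = (fun v : Fin (n+1) → (Set.Icc 1 (s-1) : Set ℕ) =>
            ((v (Fin.last n) : ℕ) : ℝ) / (s:ℝ) ^ (∑ k : Fin (n+1), (v k : ℕ)))
          ∘ (fun a => fun k : Fin (n+1) => a (k : ℕ)) := by
      funext a
      show ((a n : ℕ) : ℝ) / (s:ℝ) ^ (∑ k ∈ Finset.range (n+1), (a k : ℕ)) = _
      simp only [Function.comp_apply]
      have hsum : ∑ k ∈ Finset.range (n+1), (a k : ℕ) = ∑ k : Fin (n+1), (a (k:ℕ) : ℕ) :=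
        Finset.sum_range (fun i => (a i : ℕ))
      rw [hsum]
      rfl
    rw [hfac]
    exact (continuous_of_discreteTopology).comp
      (continuous_pi (fun k => continuous_apply ((k : ℕ))))
  · exact summable_bound hs
  · intro n a
    rw [Real.norm_eq_abs, abs_of_nonneg (term_nonneg hs _ n)]
    exact term_le hs (valid_of_digits a) n

end Closed

end Stmt4Aux

open Stmt4Aux

/-- For an integer `s > 2`, the set `S` is perfect: closed with no isolated points. -/
theorem stmt4 (s : ℕ) (hs : 2 < s) :
    IsClosed (Sset s) ∧ ∀ x ∈ Sset s, AccPt x (Filter.principal (Sset s)) := by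
  constructor
  · haveI : Finite (Set.Icc 1 (s-1) : Set ℕ) := (Set.finite_Icc _ _).to_subtype
    rw [range_gmap hs]
    exact (isCompact_range (continuous_gmap hs)).isClosed
  · intro x hx
    obtain ⟨α, hval, hxe⟩ := hx
    have hval' : Valid s α := hval
    have hx' : x = fval s α := hxe
    rw [accPt_iff_nhds]
    intro U hU
    rcases Metric.mem_nhds_iff.1 hU with ⟨ε, hε, hball⟩
    have hr0 : (0:ℝ) ≤ 1/(s:ℝ) := by positivity
    have hr1 : (1:ℝ)/(s:ℝ) < 1 := (div_lt_one (hs0 hs)).2 (hs1 hs)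
    obtain ⟨N, hN⟩ := exists_pow_lt_of_lt_one hε hr1
    set b : ℕ := if α N = 1 then 2 else 1 with hb
    have hbv : 1 ≤ b ∧ b ≤ s - 1 := by
      by_cases h : α N = 1 <;> simp only [hb, h, if_true, if_false] <;> omega
    have hbne : b ≠ α N := by
      by_cases h : α N = 1
      · simp only [hb, h, if_true]; omega
      · simp only [hb, h, if_false]; omega
    set β : ℕ → ℕ := Function.update α N b with hβ
    have hβv : Valid s β := by
      intro n
      by_cases h : n = N
      · subst h; rw [hβ, Function.update_self]; exact hbv
      · rw [hβ, Function.update_of_ne h]; exact hval n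
    have hpre : ∀ k, k < N → β k = α k := fun k hk =>
      Function.update_of_ne (by omega) _ _
    have hterm_pre : ∀ n ∈ Finset.range N, term s β n = term s α n := by
      intro n hn
      rw [Finset.mem_range] at hn
      unfold term
      rw [hpre n hn]
      congr 2
      exact Finset.sum_congr rfl (fun k hk => hpre k (lt_of_lt_of_le (Finset.mem_range.1 hk) hn))
    have hP : ∑ k ∈ Finset.range N, β k = ∑ k ∈ Finset.range N, α k :=
      Finset.sum_congr rfl (fun k hk => hpre k (Finset.mem_range.1 hk))
    set P := ∑ k ∈ Finset.range N, α k with hPdef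
    have hPN : N ≤ P := by
      calc N = ∑ _k ∈ Finset.range N, 1 := by simp
        _ ≤ P := Finset.sum_le_sum (fun i _ => (hval i).1)
    set γ : ℕ → ℕ := fun m => α (m + N) with hγ
    set γ' : ℕ → ℕ := fun m => β (m + N) with hγ'
    have hγv : Valid s γ := fun m => hval (m + N)
    have hγ'v : Valid s γ' := fun m => hβv (m + N)
    have hdα := fval_decomp hs hval' N
    have hdβ := fval_decomp hs hβv N
    rw [hP, Finset.sum_congr rfl hterm_pre] at hdβ
    have hdiff : fval s β - fval s α = (1/(s:ℝ)^P) * (fval s γ' - fval s γ) := by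
      rw [hdα, hdβ]; ring
    have hdig : γ' 0 ≠ γ 0 := by
      show β (0 + N) ≠ α (0 + N)
      simp only [Nat.zero_add]
      rw [hβ, Function.update_self]
      exact hbne
    have hne : fval s γ' ≠ fval s γ := fval_ne hs hγ'v hγv hdig
    have hcpos : (0:ℝ) < 1/(s:ℝ)^P := by positivity
    have hyne : fval s β ≠ x := by
      rw [hx']
      intro h
      have : fval s β - fval s α = 0 := by rw [h]; ring
      rw [hdiff] at this
      rcases mul_eq_zero.1 this with h1 | h1
      · exact absurd h1 (ne_of_gt hcpos)
      · exact hne (by linarith)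
    have hdist : |fval s β - x| < ε := by
      rw [hx', hdiff, abs_mul, abs_of_pos hcpos]
      have h1 : |fval s γ' - fval s γ| ≤ 1 := by
        have := fval_nonneg hs γ
        have := fval_nonneg hs γ'
        have := fval_le_one hs hγv
        have := fval_le_one hs hγ'v
        rw [abs_le]; constructor <;> linarith
      have h2 : (1:ℝ)/(s:ℝ)^P ≤ ((1:ℝ)/(s:ℝ))^N := by
        have : ((1:ℝ)/(s:ℝ))^P ≤ ((1:ℝ)/(s:ℝ))^N := pow_le_pow_of_le_one hr0 hr1.le hPN
        rwa [div_pow, one_pow] at this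
      calc (1/(s:ℝ)^P) * |fval s γ' - fval s γ| ≤ (1/(s:ℝ)^P) * 1 :=
            mul_le_mul_of_nonneg_left h1 hcpos.le
        _ = 1/(s:ℝ)^P := by ring
        _ ≤ ((1:ℝ)/(s:ℝ))^N := h2
        _ < ε := hN
    refine ⟨fval s β, ⟨hball ?_, ⟨β, hβv, rfl⟩⟩, hyne⟩
    rw [Metric.mem_ball, Real.dist_eq]
    exact hdist
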